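/- Let (A,·) be a commutative associative algebra and φ : A → A a linear map in the centroid of (A,·), i.e., φ(x·y) = φ(x)·y = x·φ(y) for all x,y. Define x∘y := x·φ(y). Then (A,·,∘) is a transposed Novikov-Poisson algebra. -/
import Mathlib


/-- If φ is in the centroid of a commutative associative algebra
(A,·), then x∘y := x·φ(y) makes (A,·,∘) a transposed Novikov-Poisson algebra. -/
theorem stmt5 {k A : Type*} [Field k] [AddCommGroup A] [Module k A]
    (hchar : (2:k) ≠ 0)
    (mul : A →ₗ[k] A →ₗ[k] A)
    (hcomm : ∀ x y : A, mul x y = mul y x)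
    (hassoc : ∀ x y z : A, mul (mul x y) z = mul x (mul y z))
    (φ : A →ₗ[k] A)
    (hφ₁ : ∀ x y : A, φ (mul x y) = mul (φ x) y)
    (hφ₂ : ∀ x y : A, φ (mul x y) = mul x (φ y))
    (cir : A → A → A)
    (hcir : ∀ x y : A, cir x y = mul x (φ y)) :
    (∀ x y z : A, cir (cir x y) z = cir (cir x z) y) ∧
    (∀ x y z : A, cir (cir x y) z - cir x (cir y z) = cir (cir y x) z - cir y (cir x z)) ∧
    (∀ x y z : A, cir (mul x y) z = cir (mul x z) y) ∧
    (∀ x y z : A, (2:k) • mul z (cir x y) = cir (mul z x) y + cir x (mul z y)) := by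
  refine ⟨?_, ?_, ?_, ?_⟩
  · intro x y z
    simp only [hcir]
    rw [hassoc, hassoc, hcomm (φ y) (φ z)]
  · intro x y z
    have h : ∀ a b c : A, cir (cir a b) c - cir a (cir b c) = 0 := by
      intro a b c
      simp only [hcir, hφ₁]
      rw [hassoc, sub_self]
    rw [h, h]
  · intro x y z
    simp only [hcir]
    rw [hassoc, hassoc, ← hφ₂, hcomm y z, hφ₂]
  · intro x y z
    simp only [hcir, hφ₂]
    rw [two_smul]
    congr 1
    · exact (hassoc z x (φ y)).symm
    · rw [← hassoc, hcomm z x, hassoc]
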